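/- The blow-up time of the scalar Riccati equation is nondecreasing in the parameter: for ρ₁ ≤ ρ₂ one has t^k_{ρ₁} ≤ t^k_{ρ₂}. Moreover lim_{ρ → +∞} t^k_ρ = T, i.e. for every t̃ < T there exists ρ̃ such that t^k_ρ > t̃ for all ρ > ρ̃. -/

import Mathlib

open Filter Set intervalIntegral

section helpers
variable {t0 T : ℝ}

/-- Backward linear comparison: if `v' = -(φ v + ψ)` on `(t0,T)`, `ψ ≥ 0`, `v T = 0`,
then `v t0 ≥ 0`. -/
lemma keyG (t0 T : ℝ) (hlt : t0 < T) (v φ ψ : ℝ → ℝ)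
    (hv : ContinuousOn v (Icc t0 T))
    (hφ : ContinuousOn φ (Icc t0 T))
    (hφa : ∀ t ∈ Ioo t0 T, ContinuousAt φ t)
    (hd : ∀ t ∈ Ioo t0 T, HasDerivAt v (-(φ t * v t + ψ t)) t)
    (hψ : ∀ t ∈ Ioo t0 T, 0 ≤ ψ t)
    (hvT : v T = 0) : 0 ≤ v t0 := by
  set F : ℝ → ℝ := fun t => ∫ s in t0..t, φ s with hF
  have huIcc : uIcc t0 T = Icc t0 T := uIcc_of_le hlt.le
  have hFc : ContinuousOn F (Icc t0 T) := by
    have := continuousOn_primitive_interval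
      (f := φ) (μ := MeasureTheory.volume) (a := t0) (b := T)
      (by rw [huIcc]; exact (hφ.mono Subset.rfl).integrableOn_compact isCompact_Icc)
    rwa [huIcc] at this
  have hFd : ∀ t ∈ Ioo t0 T, HasDerivAt F (φ t) t := by
    intro t ht
    have hIoo : ContinuousOn φ (Ioo t0 T) := fun x hx => (hφa x hx).continuousWithinAt
    refine integral_hasDerivAt_right ?_ ?_ (hφa t ht)
    · exact (hφ.mono (by rw [uIcc_of_le ht.1.le]; exact Icc_subset_Icc le_rfl ht.2.le)).intervalIntegrable
    · exact hIoo.stronglyMeasurableAtFilter isOpen_Ioo t ht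
  set w : ℝ → ℝ := fun t => v t * Real.exp (F t) with hw
  have hwc : ContinuousOn w (Icc t0 T) :=
    hv.mul (Real.continuous_exp.comp_continuousOn hFc)
  have hwd : ∀ t ∈ Ioo t0 T, HasDerivAt w (-(ψ t * Real.exp (F t))) t := by
    intro t ht
    have := (hd t ht).mul (hFd t ht).exp
    exact this.congr_deriv (by ring)
  have hanti : AntitoneOn w (Icc t0 T) := by
    refine antitoneOn_of_deriv_nonpos (convex_Icc _ _) hwc ?_ ?_
    · intro t ht
      rw [interior_Icc] at ht
      exact (hwd t ht).differentiableAt.differentiableWithinAt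
    · intro t ht
      rw [interior_Icc] at ht
      rw [(hwd t ht).deriv]
      have := hψ t ht
      nlinarith [Real.exp_pos (F t)]
  have h0 : w T ≤ w t0 :=
    hanti (left_mem_Icc.2 hlt.le) (right_mem_Icc.2 hlt.le) hlt.le
  have hwT : w T = 0 := by simp [hw, hvT]
  have hwt0 : w t0 = v t0 * Real.exp (F t0) := rfl
  rw [hwT, hwt0] at h0
  nlinarith [Real.exp_pos (F t0)]

/-- Strict version: if moreover `ψ > 0` then `v t0 > 0`. -/
lemma keyGs (t0 T : ℝ) (hlt : t0 < T) (v φ ψ : ℝ → ℝ)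
    (hv : ContinuousOn v (Icc t0 T))
    (hφ : ContinuousOn φ (Icc t0 T))
    (hφa : ∀ t ∈ Ioo t0 T, ContinuousAt φ t)
    (hd : ∀ t ∈ Ioo t0 T, HasDerivAt v (-(φ t * v t + ψ t)) t)
    (hψ : ∀ t ∈ Ioo t0 T, 0 < ψ t)
    (hvT : v T = 0) : 0 < v t0 := by
  set F : ℝ → ℝ := fun t => ∫ s in t0..t, φ s with hF
  have huIcc : uIcc t0 T = Icc t0 T := uIcc_of_le hlt.le
  have hFc : ContinuousOn F (Icc t0 T) := by
    have := continuousOn_primitive_interval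
      (f := φ) (μ := MeasureTheory.volume) (a := t0) (b := T)
      (by rw [huIcc]; exact (hφ.mono Subset.rfl).integrableOn_compact isCompact_Icc)
    rwa [huIcc] at this
  have hFd : ∀ t ∈ Ioo t0 T, HasDerivAt F (φ t) t := by
    intro t ht
    have hIoo : ContinuousOn φ (Ioo t0 T) := fun x hx => (hφa x hx).continuousWithinAt
    refine integral_hasDerivAt_right ?_ ?_ (hφa t ht)
    · exact (hφ.mono (by rw [uIcc_of_le ht.1.le]; exact Icc_subset_Icc le_rfl ht.2.le)).intervalIntegrable
    · exact hIoo.stronglyMeasurableAtFilter isOpen_Ioo t ht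
  set w : ℝ → ℝ := fun t => v t * Real.exp (F t) with hw
  have hwc : ContinuousOn w (Icc t0 T) :=
    hv.mul (Real.continuous_exp.comp_continuousOn hFc)
  have hwd : ∀ t ∈ Ioo t0 T, HasDerivAt w (-(ψ t * Real.exp (F t))) t := by
    intro t ht
    have := (hd t ht).mul (hFd t ht).exp
    exact this.congr_deriv (by ring)
  have hanti : StrictAntiOn w (Icc t0 T) := by
    refine strictAntiOn_of_deriv_neg (convex_Icc _ _) hwc ?_
    intro t ht
    rw [interior_Icc] at ht
    rw [(hwd t ht).deriv]
    have := hψ t ht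
    nlinarith [Real.exp_pos (F t)]
  have h0 : w T < w t0 :=
    hanti (left_mem_Icc.2 hlt.le) (right_mem_Icc.2 hlt.le) hlt
  have hwT : w T = 0 := by simp [hw, hvT]
  have hwt0 : w t0 = v t0 * Real.exp (F t0) := rfl
  rw [hwT, hwt0] at h0
  nlinarith [Real.exp_pos (F t0)]

lemma ricci_lb {A u x C β aa HH cc P : ℝ}
    (haFx : -(A * u) ≤ aa * x) (hH11 : β ≤ HH) (hcx : P * x ^ 2 ≤ cc * x ^ 2)
    (hPx : P * x ^ 2 = 2 * C ^ 2 / β * x ^ 2 + A ^ 2 / (2 * β) * x ^ 2)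
    (h7 : A ^ 2 / (2 * β) * x ^ 2 - A * u + β / 2 = (A * u - β) ^ 2 / (2 * β))
    (h9 : 0 ≤ (A * u - β) ^ 2 / (2 * β)) :
    β / 2 + 2 * C ^ 2 / β * x ^ 2 ≤ aa * x + HH + cc * x ^ 2 := by
  linarith

end helpers

/-- Right-hand side of the scalar Riccati equation `−k̇ = ricS ρ t k`. -/
noncomputable def ricS (H11 H13 H14 H21 H22 H33 H44 Hb22 : ℝ → ℝ)
    (ρ t k : ℝ) : ℝ :=
  (2 * H21 t + (H13 t) ^ 2 + (H14 t) ^ 2) * k + H11 t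
    + (H22 t - ρ * Hb22 t - H33 t * (H13 t) ^ 2 - H44 t * (H14 t) ^ 2) * k ^ 2

/-- the blow-up time of the scalar Riccati equation is
nondecreasing in `ρ`, and `t^k_ρ → T` as `ρ → +∞`. -/
theorem stmt_14
    (T β : ℝ) (hT : 0 < T) (hβ : 0 < β)
    (H11 H12 H13 H14 H21 H22 H33 H44 Hb22 : ℝ → ℝ)
    (hc11 : Continuous H11) (hc12 : Continuous H12) (hc13 : Continuous H13)
    (hc14 : Continuous H14) (hc21 : Continuous H21) (hc22 : Continuous H22)
    (hc33 : Continuous H33) (hc44 : Continuous H44) (hcb22 : Continuous Hb22)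
    (hconst : ∀ t : ℝ, t ≤ 0 → H11 t = H11 0 ∧ H12 t = H12 0 ∧ H13 t = H13 0 ∧
      H14 t = H14 0 ∧ H21 t = H21 0 ∧ H22 t = H22 0 ∧ H33 t = H33 0 ∧
      H44 t = H44 0 ∧ Hb22 t = Hb22 0)
    (hbound : ∀ t : ℝ, t ≤ T → β ≤ H11 t ∧ H22 t ≤ -β ∧ H33 t ≤ -β ∧
      H44 t ≤ -β ∧ Hb22 t < 0)
    (k : ℝ → ℝ → ℝ) (tb : ℝ → EReal)
    (htbT : ∀ ρ : ℝ, tb ρ < (T : EReal))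
    (hterm : ∀ ρ : ℝ, k ρ T = 0)
    (hcont : ∀ ρ : ℝ, ContinuousOn (k ρ) {t : ℝ | tb ρ < (t : EReal) ∧ t ≤ T})
    (hode : ∀ ρ t : ℝ, tb ρ < (t : EReal) → t < T →
      HasDerivAt (k ρ) (-(ricS H11 H13 H14 H21 H22 H33 H44 Hb22 ρ t (k ρ t))) t)
    (hblow : ∀ ρ : ℝ, ⊥ < tb ρ →
      Tendsto (fun t => |k ρ t|) (nhdsWithin (tb ρ).toReal (Set.Ioi (tb ρ).toReal)) atTop) :
    (∀ ρ₁ ρ₂ : ℝ, ρ₁ ≤ ρ₂ → tb ρ₁ ≤ tb ρ₂) ∧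
    ∀ t' : ℝ, t' < T → ∃ ρ' : ℝ, ∀ ρ : ℝ, ρ' < ρ → (t' : EReal) < tb ρ := by
  set aF : ℝ → ℝ := fun t => 2 * H21 t + (H13 t) ^ 2 + (H14 t) ^ 2 with haF
  set cF : ℝ → ℝ → ℝ := fun ρ t =>
    H22 t - ρ * Hb22 t - H33 t * (H13 t) ^ 2 - H44 t * (H14 t) ^ 2 with hcF
  have haFc : Continuous aF :=
    ((continuous_const.mul hc21).add (hc13.pow 2)).add (hc14.pow 2)
  have hcFc : ∀ ρ, Continuous (cF ρ) := fun ρ =>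
    ((hc22.sub (continuous_const.mul hcb22)).sub (hc33.mul (hc13.pow 2))).sub
      (hc44.mul (hc14.pow 2))
  have hricx : ∀ ρ t x, ricS H11 H13 H14 H21 H22 H33 H44 Hb22 ρ t x
      = aF t * x + H11 t + cF ρ t * x ^ 2 := by
    intro ρ t x; simp only [ricS, haF, hcF]
  -- domains
  have hDsub : ∀ ρ : ℝ, ∀ t0 : ℝ, tb ρ < (t0 : EReal) →
      Icc t0 T ⊆ {t : ℝ | tb ρ < (t : EReal) ∧ t ≤ T} := by
    intro ρ t0 h0 s hs
    exact ⟨h0.trans_le (EReal.coe_le_coe_iff.2 hs.1), hs.2⟩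
  have hkc : ∀ ρ : ℝ, ∀ t0 : ℝ, tb ρ < (t0 : EReal) →
      ContinuousOn (k ρ) (Icc t0 T) := fun ρ t0 h0 => (hcont ρ).mono (hDsub ρ t0 h0)
  have hkat : ∀ ρ : ℝ, ∀ t0 t : ℝ, tb ρ < (t0 : EReal) → t ∈ Ioo t0 T →
      ContinuousAt (k ρ) t := by
    intro ρ t0 t h0 ht
    refine ((hcont ρ).mono ?_).continuousAt (Ioo_mem_nhds ht.1 ht.2)
    intro s hs
    exact ⟨h0.trans (EReal.coe_lt_coe_iff.2 hs.1), hs.2.le⟩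
  -- positivity of k on the interior of the domain
  have kpos : ∀ ρ : ℝ, ∀ t0 : ℝ, tb ρ < (t0 : EReal) → t0 < T → 0 < k ρ t0 := by
    intro ρ t0 h1 h2
    refine keyGs t0 T h2 (k ρ) (fun t => aF t + cF ρ t * k ρ t) H11 (hkc ρ t0 h1) ?_ ?_ ?_ ?_
      (hterm ρ)
    · exact (haFc.continuousOn).add ((hcFc ρ).continuousOn.mul (hkc ρ t0 h1))
    · intro t ht
      exact (haFc.continuousAt).add ((hcFc ρ).continuousAt.mul (hkat ρ t0 t h1 ht))
    · intro t ht
      have hodet := hode ρ t (h1.trans (EReal.coe_lt_coe_iff.2 ht.1)) ht.2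
      have heq : -(ricS H11 H13 H14 H21 H22 H33 H44 Hb22 ρ t (k ρ t))
          = -((aF t + cF ρ t * k ρ t) * k ρ t + H11 t) := by
        rw [hricx]; ring
      rwa [heq] at hodet
    · intro t ht
      exact hβ.trans_le (hbound t ht.2.le).1
  constructor
  · -- monotonicity of the blow-up time
    intro ρ₁ ρ₂ h12
    by_contra hcon
    push_neg at hcon
    have hbot : (⊥ : EReal) < tb ρ₁ := bot_le.trans_lt hcon
    have hnt : tb ρ₁ ≠ ⊤ := (htbT ρ₁).ne_top
    set t₁ := (tb ρ₁).toReal with ht₁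
    have hcoe : ((t₁ : ℝ) : EReal) = tb ρ₁ := EReal.coe_toReal hnt hbot.ne'
    have ht₁T : t₁ < T := by
      rw [← EReal.coe_lt_coe_iff, hcoe]; exact htbT ρ₁
    have hcomp : ∀ t0 : ℝ, t₁ < t0 → t0 < T → k ρ₁ t0 ≤ k ρ₂ t0 := by
      intro t0 h1 h2
      have hd1 : tb ρ₁ < (t0 : EReal) := by rw [← hcoe]; exact EReal.coe_lt_coe_iff.2 h1
      have hd2 : tb ρ₂ < (t0 : EReal) := hcon.trans hd1
      have := keyG t0 T h2 (fun s => k ρ₂ s - k ρ₁ s)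
        (fun s => aF s + cF ρ₁ s * (k ρ₂ s + k ρ₁ s))
        (fun s => (ρ₂ - ρ₁) * (-Hb22 s) * (k ρ₂ s) ^ 2)
        ((hkc ρ₂ t0 hd2).sub (hkc ρ₁ t0 hd1))
        ((haFc.continuousOn).add ((hcFc ρ₁).continuousOn.mul
          (((hkc ρ₂ t0 hd2)).add (hkc ρ₁ t0 hd1))))
        (fun t ht => (haFc.continuousAt).add ((hcFc ρ₁).continuousAt.mul
          ((hkat ρ₂ t0 t hd2 ht).add (hkat ρ₁ t0 t hd1 ht))))
        ?_ ?_ (by simp [hterm])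
      · exact sub_nonneg.mp this
      · intro t ht
        have he2 := hode ρ₂ t (hd2.trans (EReal.coe_lt_coe_iff.2 ht.1)) ht.2
        have he1 := hode ρ₁ t (hd1.trans (EReal.coe_lt_coe_iff.2 ht.1)) ht.2
        have := he2.sub he1
        exact this.congr_deriv (by rw [hricx, hricx]; ring)
      · intro t ht
        have hb := (hbound t ht.2.le).2.2.2.2
        have h1 : (0:ℝ) ≤ ρ₂ - ρ₁ := by linarith
        have h2 : (0:ℝ) ≤ -Hb22 t := by linarith
        positivity
    have hev : Ioo t₁ T ∈ nhdsWithin t₁ (Ioi t₁) :=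
      Ioo_mem_nhdsGT_of_mem ⟨le_rfl, ht₁T⟩
    have hKinf : Tendsto (k ρ₁) (nhdsWithin t₁ (Ioi t₁)) atTop := by
      refine (hblow ρ₁ hbot).congr' ?_
      filter_upwards [hev] with t ht
      exact abs_of_pos (kpos ρ₁ t (by rw [← hcoe]; exact EReal.coe_lt_coe_iff.2 ht.1) ht.2)
    have hk2top : Tendsto (k ρ₂) (nhdsWithin t₁ (Ioi t₁)) atTop := by
      refine tendsto_atTop_mono' _ ?_ hKinf
      filter_upwards [hev] with t ht
      exact hcomp t ht.1 ht.2
    have hd2t₁ : tb ρ₂ < ((t₁ : ℝ) : EReal) := by rw [hcoe]; exact hcon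
    have hc2 : Tendsto (k ρ₂) (nhdsWithin t₁ (Ioi t₁)) (nhds (k ρ₂ t₁)) := by
      have hmem : t₁ ∈ {t : ℝ | tb ρ₂ < (t : EReal) ∧ t ≤ T} := ⟨hd2t₁, ht₁T.le⟩
      have := (hcont ρ₂ t₁ hmem).mono (s := Ioc t₁ T)
        (fun s hs => ⟨hcon.trans (by rw [← hcoe]; exact EReal.coe_lt_coe_iff.2 hs.1), hs.2⟩)
      rwa [ContinuousWithinAt, nhdsWithin_Ioc_eq_nhdsGT ht₁T] at this
    exact not_tendsto_atTop_of_tendsto_nhds hc2 hk2top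
  · -- blow-up time tends to T
    intro t' ht'
    have hne : (Icc (0:ℝ) T).Nonempty := nonempty_Icc.2 hT.le
    obtain ⟨xa, hxa, hA'⟩ := isCompact_Icc.exists_isMaxOn hne
      ((continuous_abs.comp haFc).continuousOn)
    have hA := isMaxOn_iff.1 hA'
    set A := |aF xa| with hAdef
    have hA0 : 0 ≤ A := abs_nonneg _
    have hAb : ∀ t : ℝ, t ≤ T → |aF t| ≤ A := by
      intro t ht
      rcases le_or_gt 0 t with h | h
      · exact hA t ⟨h, ht⟩
      · obtain ⟨e1, e2, e3, e4, e5, e6, e7, e8, e9⟩ := hconst t h.le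
        have he : aF t = aF 0 := by simp only [haF]; rw [e3, e4, e5]
        rw [he]; exact hA 0 ⟨le_rfl, hT.le⟩
    set c0F : ℝ → ℝ := fun t => H22 t - H33 t * (H13 t) ^ 2 - H44 t * (H14 t) ^ 2 with hc0F
    have hc0c : Continuous c0F :=
      (hc22.sub (hc33.mul (hc13.pow 2))).sub (hc44.mul (hc14.pow 2))
    obtain ⟨xc, hxc, hcmle'⟩ := isCompact_Icc.exists_isMinOn hne hc0c.continuousOn
    have hcmle := isMinOn_iff.1 hcmle'
    set cm := c0F xc with hcmdef
    have hcmb : ∀ t : ℝ, t ≤ T → cm ≤ c0F t := by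
      intro t ht
      rcases le_or_gt 0 t with h | h
      · exact hcmle t ⟨h, ht⟩
      · obtain ⟨e1, e2, e3, e4, e5, e6, e7, e8, e9⟩ := hconst t h.le
        have he : c0F t = c0F 0 := by simp only [hc0F]; rw [e3, e4, e6, e7, e8]
        rw [he]; exact hcmle 0 ⟨le_rfl, hT.le⟩
    obtain ⟨xm, hxm, hMge'⟩ := isCompact_Icc.exists_isMaxOn hne hcb22.continuousOn
    have hMge := isMaxOn_iff.1 hMge'
    set M := Hb22 xm with hMdef
    have hMneg : M < 0 := (hbound xm hxm.2).2.2.2.2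
    have hMb : ∀ t : ℝ, t ≤ T → Hb22 t ≤ M := by
      intro t ht
      rcases le_or_gt 0 t with h | h
      · exact hMge t ⟨h, ht⟩
      · obtain ⟨e1, e2, e3, e4, e5, e6, e7, e8, e9⟩ := hconst t h.le
        rw [e9]; exact hMge 0 ⟨le_rfl, hT.le⟩
    set C := Real.pi / (T - t') with hC
    have hCpos : 0 < C := div_pos Real.pi_pos (by linarith)
    set lam := β / (2 * C) with hlam
    have hlampos : 0 < lam := by positivity
    set P := 2 * C ^ 2 / β + A ^ 2 / (2 * β) with hP
    refine ⟨max 0 ((P - cm) / (-M)), ?_⟩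
    intro ρ hρ
    have hρ0 : 0 ≤ ρ := (le_max_left _ _).trans_lt hρ |>.le
    have hcFb : ∀ t : ℝ, t ≤ T → P ≤ cF ρ t := by
      intro t ht
      have h1 : Hb22 t ≤ M := hMb t ht
      have h2 : cm ≤ c0F t := hcmb t ht
      have h3 : (P - cm) / (-M) < ρ := (le_max_right _ _).trans_lt hρ
      have h4 : P - cm < ρ * (-M) := by
        rwa [div_lt_iff₀ (by linarith : (0:ℝ) < -M)] at h3
      have h5 : ρ * (-M) ≤ ρ * (-Hb22 t) := by nlinarith
      have he : cF ρ t = c0F t - ρ * Hb22 t := by simp only [hcF, hc0F]; ring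
      rw [he]; nlinarith
    by_contra hcon
    push_neg at hcon
    set t0 := (3 * t' + T) / 4 with ht0
    have ht0a : t' < t0 := by rw [ht0]; linarith
    have ht0b : t0 < T := by rw [ht0]; linarith
    have hdom : ∀ s : ℝ, t0 ≤ s → tb ρ < (s : EReal) := by
      intro s hs
      exact hcon.trans_lt (EReal.coe_lt_coe_iff.2 (ht0a.trans_le hs))
    have hdomt0 : tb ρ < (t0 : EReal) := hdom t0 le_rfl
    set θ : ℝ → ℝ := fun s => Real.arctan (k ρ s / lam) with hθ
    set θ' : ℝ → ℝ := fun s => (1 / (1 + (k ρ s / lam) ^ 2)) *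
      (-(ricS H11 H13 H14 H21 H22 H33 H44 Hb22 ρ s (k ρ s)) / lam) with hθ'
    have hθc : ContinuousOn θ (Icc t0 T) :=
      Real.continuous_arctan.comp_continuousOn ((hkc ρ t0 hdomt0).div_const lam)
    have hθd : ∀ s ∈ Ioo t0 T, HasDerivAt θ (θ' s) s := by
      intro s hs
      have hk := hode ρ s (hdom s hs.1.le) hs.2
      have := (Real.hasDerivAt_arctan (k ρ s / lam)).comp s (hk.div_const lam)
      exact this
    have hθ'le : ∀ s ∈ Ioo t0 T, θ' s ≤ -C := by
      intro s hs
      set x := k ρ s with hx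
      set u := |x| with hu
      have hu2 : u ^ 2 = x ^ 2 := by rw [hu, sq_abs]
      have hH11 : β ≤ H11 s := (hbound s hs.2.le).1
      have haFx : -(A * u) ≤ aF s * x := by
        have h1 : |aF s * x| ≤ A * u := by
          rw [abs_mul, hu]
          exact mul_le_mul_of_nonneg_right (hAb s hs.2.le) (abs_nonneg x)
        have h2 := neg_abs_le (aF s * x)
        linarith
      have hcx : P * x ^ 2 ≤ cF ρ s * x ^ 2 :=
        mul_le_mul_of_nonneg_right (hcFb s hs.2.le) (sq_nonneg x)
      have hric : C / lam * (lam ^ 2 + x ^ 2)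
          ≤ ricS H11 H13 H14 H21 H22 H33 H44 Hb22 ρ s x := by
        rw [hricx]
        have hd1 : C / lam * (lam ^ 2 + x ^ 2) = C * lam + (C / lam) * x ^ 2 := by
          field_simp
        have hd2 : C / lam = 2 * C ^ 2 / β := by
          rw [hlam]; field_simp
        have hd3 : C * lam = β / 2 := by
          rw [hlam]; field_simp
        have h7 : A ^ 2 / (2 * β) * x ^ 2 - A * u + β / 2
            = (A * u - β) ^ 2 / (2 * β) := by
          rw [← hu2]; field_simp; ring
        have h9 : 0 ≤ (A * u - β) ^ 2 / (2 * β) := by positivity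
        rw [hd1, hd2, hd3]
        have hPx : P * x ^ 2 = 2 * C ^ 2 / β * x ^ 2 + A ^ 2 / (2 * β) * x ^ 2 := by
          rw [hP]; ring
        exact ricci_lb haFx hH11 hcx hPx h7 h9
      have hQ : 0 < lam ^ 2 + x ^ 2 := by positivity
      have h1x : 1 + (x / lam) ^ 2 = (lam ^ 2 + x ^ 2) / lam ^ 2 := by
        field_simp
      have he : θ' s = -(lam * ricS H11 H13 H14 H21 H22 H33 H44 Hb22 ρ s x)
          / (lam ^ 2 + x ^ 2) := by
        simp only [hθ', ← hx, h1x]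
        field_simp
      rw [he]
      rw [div_le_iff₀ hQ]
      have h10 : lam * (C / lam * (lam ^ 2 + x ^ 2))
          ≤ lam * ricS H11 H13 H14 H21 H22 H33 H44 Hb22 ρ s x :=
        mul_le_mul_of_nonneg_left hric hlampos.le
      have h11 : lam * (C / lam * (lam ^ 2 + x ^ 2)) = C * (lam ^ 2 + x ^ 2) := by
        field_simp
      linarith
    obtain ⟨ξ, hξ, hsl⟩ := exists_hasDerivAt_eq_slope θ θ' ht0b hθc hθd
    have hθT : θ T = 0 := by simp [hθ, hterm ρ]
    have hθt0lt : θ t0 < Real.pi / 2 := Real.arctan_lt_pi_div_two _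
    have hξle : θ' ξ ≤ -C := hθ'le ξ hξ
    rw [hsl, hθT] at hξle
    have hTt0 : 0 < T - t0 := by linarith
    have h11 : C * (T - t0) ≤ θ t0 := by
      rw [div_le_iff₀ hTt0] at hξle
      linarith
    have h13 : C * (T - t0) = 3 * Real.pi / 4 := by
      rw [hC, ht0]
      have hne' : T - t' ≠ 0 := by linarith
      field_simp
      ring
    linarith [Real.pi_pos]
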